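/- (a) The natural map ℤ[X] ⊗ A → ℤ[X/G] ⊗ A, induced by sending x ∈ X to its orbit, induces an isomorphism on G-coinvariants: (ℤ[X] ⊗ A)_G ≅ ℤ[X/G] ⊗ A. (b) Let ℤ[X]₀ ⊆ ℤ[X] (resp. ℤ[X/G]₀ ⊆ ℤ[X/G]) denote the subgroup of elements whose coefficients sum to zero. If the natural map ⊕_{[x] ∈ X/G} (G_x)^{ab} ⊗ A → G^{ab} ⊗ A, induced by the inclusions of stabilizers G_x ≤ G, is surjective, then the induced map (ℤ[X]₀ ⊗ A)_G → ℤ[X/G]₀ ⊗ A is also an isomorphism. -/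

import Mathlib

open scoped TensorProduct
noncomputable section

/-- The natural map `ℤ[X] ⊗ A → ℤ[X/G] ⊗ A` (with `ℤ[X] ⊗ A` identified with `X →₀ A`),
induced by sending `x ∈ X` to its orbit. -/
def orbMap (G : Type*) {X : Type*} [Group G] [MulAction G X] (A : Type*) [AddCommGroup A]
    (m : X →₀ A) : Quotient (MulAction.orbitRel G X) →₀ A :=
  Finsupp.mapDomain (Quotient.mk (MulAction.orbitRel G X)) m

/-- The subgroup of `ℤ[X] ⊗ A` generated by the elements `m − g·m` (whose quotient is the module
of `G`-coinvariants). -/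
def coinvSub (G X : Type*) [Group G] [MulAction G X] (A : Type*) [AddCommGroup A] :
    AddSubgroup (X →₀ A) :=
  AddSubgroup.closure
    {y | ∃ (m : X →₀ A) (g : G), y = m - Finsupp.mapDomain (fun x => g • x) m}

/-- The subgroup of `ℤ[X]₀ ⊗ A` generated by the elements `m − g·m` with `m` of coefficient-sum
zero. -/
def coinvSub0 (G X : Type*) [Group G] [MulAction G X] (A : Type*) [AddCommGroup A] :
    AddSubgroup (X →₀ A) :=
  AddSubgroup.closure
    {y | ∃ m : X →₀ A, (m.sum fun _ a => a) = 0 ∧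
      ∃ g : G, y = m - Finsupp.mapDomain (fun x => g • x) m}

section Aux

variable {G X : Type*} [Group G] [MulAction G X] {A : Type*} [AddCommGroup A]

lemma mem_coinvSub_gen (m : X →₀ A) (g : G) :
    m - Finsupp.mapDomain (fun x => g • x) m ∈ coinvSub G X A :=
  AddSubgroup.subset_closure ⟨m, g, rfl⟩

lemma mem_coinvSub0_gen (m : X →₀ A) (hm : (m.sum fun _ a => a) = 0) (g : G) :
    m - Finsupp.mapDomain (fun x => g • x) m ∈ coinvSub0 G X A :=
  AddSubgroup.subset_closure ⟨m, hm, g, rfl⟩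

lemma single_sub_single_sum (x y : X) (a : A) :
    ((Finsupp.single x a - Finsupp.single y a).sum fun _ a => a) = 0 := by
  rw [Finsupp.sum_sub_index (fun _ _ _ => rfl)]
  simp

lemma mapDomain_sub' (f : X → X) (m n : X →₀ A) :
    Finsupp.mapDomain f (m - n) = Finsupp.mapDomain f m - Finsupp.mapDomain f n :=
  map_sub (Finsupp.mapDomain.addMonoidHom f) m n

lemma mapDomain_single_sub (g : G) (x y : X) (a : A) :
    Finsupp.mapDomain (fun z => g • z) (Finsupp.single x a - Finsupp.single y a)
      = Finsupp.single (g • x) a - Finsupp.single (g • y) a := by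
  rw [mapDomain_sub', Finsupp.mapDomain_single, Finsupp.mapDomain_single]

/-- If `g` fixes some point `y`, then `single (g•x₀) a - single x₀ a` is a coinvariance relation
coming from sum-zero elements. -/
lemma single_smul_sub_mem (x₀ y : X) (g : G) (hg : g • y = y) (a : A) :
    Finsupp.single (g • x₀) a - Finsupp.single x₀ a ∈ coinvSub0 G X A := by
  have h := mem_coinvSub0_gen (Finsupp.single x₀ a - Finsupp.single y a)
    (single_sub_single_sum x₀ y a) g
  rw [mapDomain_single_sub, hg] at h
  have e : Finsupp.single x₀ a - Finsupp.single y a -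
      (Finsupp.single (g • x₀) a - Finsupp.single y a)
      = -(Finsupp.single (g • x₀) a - Finsupp.single x₀ a) := by abel
  rw [e] at h
  exact (neg_mem_iff).mp h

/-- The crossed-homomorphism `g ↦ [single (g•x₀) a - single x₀ a]` into the quotient by
`coinvSub0`, as a monoid hom into the multiplicative version of `A →ₗ[ℤ] Q`. -/
def cPhi (x₀ : X) (A : Type*) [AddCommGroup A] :
    G →* Multiplicative (A →ₗ[ℤ] ((X →₀ A) ⧸ coinvSub0 G X A)) where
  toFun g := Multiplicative.ofAdd
    (((QuotientAddGroup.mk' (coinvSub0 G X A)).comp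
      (Finsupp.singleAddHom (g • x₀) - Finsupp.singleAddHom x₀)).toIntLinearMap)
  map_one' := by
    simp only [one_smul, sub_self, AddMonoidHom.comp_zero]
    rfl
  map_mul' g h := by
    have : ((QuotientAddGroup.mk' (coinvSub0 G X A)).comp
        (Finsupp.singleAddHom ((g * h) • x₀) - Finsupp.singleAddHom x₀)).toIntLinearMap =
      ((QuotientAddGroup.mk' (coinvSub0 G X A)).comp
        (Finsupp.singleAddHom (g • x₀) - Finsupp.singleAddHom x₀)).toIntLinearMap +
      ((QuotientAddGroup.mk' (coinvSub0 G X A)).comp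
        (Finsupp.singleAddHom (h • x₀) - Finsupp.singleAddHom x₀)).toIntLinearMap := by
      ext a
      simp only [LinearMap.add_apply,
        AddMonoidHom.coe_comp, Function.comp_apply, AddMonoidHom.sub_apply,
        Finsupp.singleAddHom_apply, AddMonoidHom.coe_toIntLinearMap,
        QuotientAddGroup.mk'_apply]
      rw [← QuotientAddGroup.mk_add, ← sub_eq_zero, ← QuotientAddGroup.mk_sub,
        QuotientAddGroup.eq_zero_iff]
      have h1 := mem_coinvSub0_gen (Finsupp.single (h • x₀) a - Finsupp.single x₀ a)
        (single_sub_single_sum _ _ a) g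
      rw [mapDomain_single_sub, smul_smul] at h1
      have e : Finsupp.single ((g * h) • x₀) a - Finsupp.single x₀ a -
          (Finsupp.single (g • x₀) a - Finsupp.single x₀ a +
            (Finsupp.single (h • x₀) a - Finsupp.single x₀ a)) =
          -(Finsupp.single (h • x₀) a - Finsupp.single x₀ a -
            (Finsupp.single ((g * h) • x₀) a - Finsupp.single (g • x₀) a)) := by abel
      rw [e]
      exact neg_mem h1
    show Multiplicative.ofAdd _ = Multiplicative.ofAdd _ * Multiplicative.ofAdd _
    rw [← ofAdd_add, this]

/-- The induced linear map `G^{ab} ⊗ A → Q`. -/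
def cPhiT (x₀ : X) (A : Type*) [AddCommGroup A] :
    (Additive (Abelianization G)) ⊗[ℤ] A →ₗ[ℤ] ((X →₀ A) ⧸ coinvSub0 G X A) :=
  TensorProduct.lift
    ((MonoidHom.toAdditiveLeft (Abelianization.lift (cPhi x₀ A))).toIntLinearMap)

lemma cPhiT_apply (x₀ : X) (g : G) (a : A) :
    cPhiT x₀ A (Additive.ofMul (Abelianization.of g) ⊗ₜ[ℤ] a)
      = QuotientAddGroup.mk' (coinvSub0 G X A)
          (Finsupp.single (g • x₀) a - Finsupp.single x₀ a) := by
  rfl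


/-- Key consequence of the surjectivity hypothesis: every `single (g•x₀) a - single x₀ a`
lies in `coinvSub0`. -/
lemma keyA
    (hsup : (⨆ x : X,
        LinearMap.range
          (TensorProduct.map
            (AddMonoidHom.toIntLinearMap
              (MonoidHom.toAdditive
                (Abelianization.map (MulAction.stabilizer G x).subtype)))
            (LinearMap.id : A →ₗ[ℤ] A))) = ⊤)
    (x₀ : X) (g : G) (a : A) :
    Finsupp.single (g • x₀) a - Finsupp.single x₀ a ∈ coinvSub0 G X A := by
  have hz : (Additive.ofMul (Abelianization.of g) ⊗ₜ[ℤ] a) ∈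
      (⨆ x : X,
        LinearMap.range
          (TensorProduct.map
            (AddMonoidHom.toIntLinearMap
              (MonoidHom.toAdditive
                (Abelianization.map (MulAction.stabilizer G x).subtype)))
            (LinearMap.id : A →ₗ[ℤ] A))) := by
    rw [hsup]; trivial
  have h0 : cPhiT x₀ A (Additive.ofMul (Abelianization.of g) ⊗ₜ[ℤ] a) = 0 := by
    refine Submodule.iSup_induction (motive := fun w => cPhiT x₀ A w = 0) _ hz ?_ (map_zero _)
      (fun u v hu hv => by
        show cPhiT x₀ A (u + v) = 0
        rw [map_add, hu, hv, add_zero])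
    intro y z hzy
    obtain ⟨t, rfl⟩ := hzy
    induction t using TensorProduct.induction_on with
    | zero => simp
    | add u v hu hv => rw [map_add, map_add, hu, hv, add_zero]
    | tmul s b =>
      obtain ⟨u, hu⟩ : ∃ u : MulAction.stabilizer G y,
          Additive.ofMul (Abelianization.of u) = s := by
        obtain ⟨u, hu⟩ : ∃ u, Abelianization.of u = s.toMul :=
          Quotient.exists_rep s.toMul
        exact ⟨u, by rw [hu]; rfl⟩
      subst hu
      rw [TensorProduct.map_tmul]
      have hι : (AddMonoidHom.toIntLinearMap
            (MonoidHom.toAdditive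
              (Abelianization.map (MulAction.stabilizer G y).subtype)))
          (Additive.ofMul (Abelianization.of u))
          = Additive.ofMul (Abelianization.of ((u : G))) := by
        simp [MonoidHom.toAdditive, Abelianization.map_of]
        rfl
      rw [hι]
      show cPhiT x₀ A (Additive.ofMul (Abelianization.of ((u : G))) ⊗ₜ[ℤ] b) = 0
      rw [cPhiT_apply, QuotientAddGroup.mk'_apply, QuotientAddGroup.eq_zero_iff]
      exact single_smul_sub_mem x₀ y (u : G) u.2 b
  rw [cPhiT_apply, QuotientAddGroup.mk'_apply, QuotientAddGroup.eq_zero_iff] at h0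
  exact h0

lemma coinvSub_le_coinvSub0
    (hsup : (⨆ x : X,
        LinearMap.range
          (TensorProduct.map
            (AddMonoidHom.toIntLinearMap
              (MonoidHom.toAdditive
                (Abelianization.map (MulAction.stabilizer G x).subtype)))
            (LinearMap.id : A →ₗ[ℤ] A))) = ⊤) :
    coinvSub G X A ≤ coinvSub0 G X A := by
  rw [coinvSub, AddSubgroup.closure_le]
  rintro y ⟨m, g, rfl⟩
  induction m using Finsupp.induction_linear with
  | zero => simpa using zero_mem _
  | add f f' hf hf' =>
    have h := add_mem hf hf'
    have e : f - Finsupp.mapDomain (fun x => g • x) f +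
        (f' - Finsupp.mapDomain (fun x => g • x) f') =
        f + f' - Finsupp.mapDomain (fun x => g • x) (f + f') := by
      rw [Finsupp.mapDomain_add]; abel
    rwa [e] at h
  | single x a =>
    rw [Finsupp.mapDomain_single]
    have h := keyA hsup x g a
    have e : Finsupp.single x a - Finsupp.single (g • x) a =
        -(Finsupp.single (g • x) a - Finsupp.single x a) := by abel
    rw [e]
    exact neg_mem h

lemma coinvSub0_le_coinvSub : coinvSub0 G X A ≤ coinvSub G X A :=
  AddSubgroup.closure_mono (fun _ hy => by
    obtain ⟨m, _, g, e⟩ := hy; exact ⟨m, g, e⟩)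

lemma orbMap_mapDomain_out (t : Quotient (MulAction.orbitRel G X) →₀ A) :
    orbMap G A (Finsupp.mapDomain Quotient.out t) = t := by
  rw [orbMap, ← Finsupp.mapDomain_comp]
  have e : (Quotient.mk (MulAction.orbitRel G X)) ∘ Quotient.out = id :=
    funext fun q => q.out_eq
  rw [e, Finsupp.mapDomain_id]

lemma orbMap_eq_zero_iff (m : X →₀ A) :
    orbMap G A m = 0 ↔ m ∈ coinvSub G X A := by
  constructor
  · intro h
    have hr : Finsupp.mapDomain
        (fun x => (Quotient.mk (MulAction.orbitRel G X) x).out) m = 0 := by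
      rw [show (fun x : X => (Quotient.mk (MulAction.orbitRel G X) x).out)
          = Quotient.out ∘ (Quotient.mk (MulAction.orbitRel G X)) from rfl,
        Finsupp.mapDomain_comp]
      rw [show Finsupp.mapDomain (Quotient.mk (MulAction.orbitRel G X)) m
          = orbMap G A m from rfl, h, Finsupp.mapDomain_zero]
    have key : ∀ n : X →₀ A, n - Finsupp.mapDomain
        (fun x => (Quotient.mk (MulAction.orbitRel G X) x).out) n ∈ coinvSub G X A := by
      intro n
      induction n using Finsupp.induction_linear with
      | zero => simpa using zero_mem _
      | add f f' hf hf' =>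
        have h' := add_mem hf hf'
        have e : f - Finsupp.mapDomain (fun x => (Quotient.mk (MulAction.orbitRel G X) x).out) f +
            (f' - Finsupp.mapDomain
              (fun x => (Quotient.mk (MulAction.orbitRel G X) x).out) f') =
            f + f' - Finsupp.mapDomain
              (fun x => (Quotient.mk (MulAction.orbitRel G X) x).out) (f + f') := by
          rw [Finsupp.mapDomain_add]; abel
        rwa [e] at h'
      | single x a =>
        obtain ⟨g, hg⟩ : ∃ g : G, g • x = (Quotient.mk (MulAction.orbitRel G X) x).out := by
          have hq : (Quotient.mk (MulAction.orbitRel G X)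
              ((Quotient.mk (MulAction.orbitRel G X) x).out))
              = Quotient.mk (MulAction.orbitRel G X) x := Quotient.out_eq _
          have := Quotient.eq''.mp hq
          exact MulAction.mem_orbit_iff.mp (MulAction.orbitRel_apply.mp this)
        have h' := mem_coinvSub_gen (Finsupp.single x a) g
        rw [Finsupp.mapDomain_single, hg] at h'
        rwa [Finsupp.mapDomain_single]
    have := key m
    rwa [hr, sub_zero] at this
  · intro h
    have hle : coinvSub G X A ≤
        (Finsupp.mapDomain.addMonoidHom (Quotient.mk (MulAction.orbitRel G X)) :
          (X →₀ A) →+ (Quotient (MulAction.orbitRel G X) →₀ A)).ker := by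
      rw [coinvSub, AddSubgroup.closure_le]
      rintro y ⟨m', g, rfl⟩
      rw [SetLike.mem_coe, AddMonoidHom.mem_ker, map_sub]
      have e : Finsupp.mapDomain.addMonoidHom (Quotient.mk (MulAction.orbitRel G X))
          (Finsupp.mapDomain (fun x => g • x) m')
          = Finsupp.mapDomain.addMonoidHom (Quotient.mk (MulAction.orbitRel G X)) m' := by
        show Finsupp.mapDomain (Quotient.mk (MulAction.orbitRel G X))
            (Finsupp.mapDomain (fun x => g • x) m') = _
        rw [← Finsupp.mapDomain_comp]
        congr 1
        funext x
        exact Quotient.sound (MulAction.orbitRel_apply.mpr (MulAction.mem_orbit x g))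
      rw [e, sub_self]
    exact AddMonoidHom.mem_ker.mp (hle h)

end Aux

theorem stmt11 {G X : Type*} [Group G] [Finite G] [MulAction G X]
    (A : Type*) [AddCommGroup A] :
    (Function.Surjective (orbMap G (X := X) A) ∧
      ∀ m : X →₀ A, orbMap G A m = 0 ↔ m ∈ coinvSub G X A) ∧
    ((⨆ x : X,
        LinearMap.range
          (TensorProduct.map
            (AddMonoidHom.toIntLinearMap
              (MonoidHom.toAdditive
                (Abelianization.map (MulAction.stabilizer G x).subtype)))
            (LinearMap.id : A →ₗ[ℤ] A))) = ⊤ →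
      (∀ t : Quotient (MulAction.orbitRel G X) →₀ A, (t.sum fun _ a => a) = 0 →
        ∃ m : X →₀ A, (m.sum fun _ a => a) = 0 ∧ orbMap G A m = t) ∧
      (∀ m : X →₀ A, (m.sum fun _ a => a) = 0 →
        (orbMap G A m = 0 ↔ m ∈ coinvSub0 G X A))) := by
  refine ⟨⟨fun t => ⟨Finsupp.mapDomain Quotient.out t, orbMap_mapDomain_out t⟩,
    fun m => orbMap_eq_zero_iff m⟩, fun hsup => ⟨?_, ?_⟩⟩
  · intro t ht
    refine ⟨Finsupp.mapDomain Quotient.out t, ?_, orbMap_mapDomain_out t⟩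
    rw [Finsupp.sum_mapDomain_index (fun _ => rfl) (fun _ _ _ => rfl)]
    exact ht
  · intro m _
    constructor
    · intro h
      exact coinvSub_le_coinvSub0 hsup ((orbMap_eq_zero_iff m).mp h)
    · intro h
      exact (orbMap_eq_zero_iff m).mpr (coinvSub0_le_coinvSub h)
end
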